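/- Let G be a graph, v a vertex of degree t ≥ 2, and G_v the Meredith extension of G at v (replace v by a copy of K_{t,t−1} attached by t pendant edges matching the former edges at v). Then G has t pairwise disjoint perfect matchings if and only if G_v has t pairwise disjoint perfect matchings. -/

import Mathlib

/-- `m` is a perfect matching of the multigraph with edge multiset `E`. -/
def IsPMOf {V : Type} [DecidableEq V] (E m : Multiset (Sym2 V)) : Prop :=
  m ≤ E ∧ ∀ v : V, (m.filter (fun e => v ∈ e)).card = 1

/-- The multigraph with edge multiset `E` is `t`-edge-connected: every
nonempty proper vertex subset has edge boundary of size at least `t`. -/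
def EdgeConnGE {V : Type} [Fintype V] [DecidableEq V]
    (E : Multiset (Sym2 V)) (t : ℕ) : Prop :=
  ∀ X : Finset V, X.Nonempty → X ≠ Finset.univ →
    t ≤ (E.filter (fun e => ∃ a ∈ X, ∃ b, b ∉ X ∧ e = s(a, b))).card

/-- The vertex type of the Meredith extension at `v`: the old vertices other
than `v`, together with the two sides `u₁,…,u_t` and `w₁,…,w_{t−1}` of a copy
of `K_{t,t−1}`. -/
abbrev MeredithV (V : Type) (v : V) (t : ℕ) : Type :=
  {x : V // x ≠ v} ⊕ (Fin t ⊕ Fin (t - 1))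

/-- The edge multiset of the Meredith extension `G_v`: delete `v`, keep all
edges not incident with `v`, add a complete bipartite `K_{t,t−1}` between the
`uᵢ` and the `wⱼ`, and join `uᵢ` to `f i` (the `i`-th former neighbor of `v`). -/
def meredithEdges {V : Type} [Fintype V] [DecidableEq V]
    (E : Multiset (Sym2 V)) (v : V) (t : ℕ) (ht : 0 < t) (f : Fin t → V) :
    Multiset (Sym2 (MeredithV V v t)) :=
  (E.filter (fun e => v ∉ e)).map (Sym2.map (fun x =>
    if h : x = v then Sum.inr (Sum.inl ⟨0, ht⟩) else Sum.inl ⟨x, h⟩)) +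
  ((Finset.univ : Finset (Fin t × Fin (t - 1))).val.map
    (fun p => s(Sum.inr (Sum.inl p.1), Sum.inr (Sum.inr p.2)))) +
  ((Finset.univ : Finset (Fin t)).val.map (fun i =>
    s((if h : f i = v then Sum.inr (Sum.inl ⟨0, ht⟩) else Sum.inl ⟨f i, h⟩),
      Sum.inr (Sum.inl i))))

section Aux

/-- Two tuples with the same multiset of values differ by a permutation. -/
lemma exists_perm_of_map_eq {n : ℕ} {X : Type} (α β : Fin n → X)
    (h : (Finset.univ.val.map α) = Finset.univ.val.map β) :
    ∃ σ : Equiv.Perm (Fin n), ∀ i, α i = β (σ i) := by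
  letI : LinearOrder X := IsWellOrder.linearOrder WellOrderingRel
  rw [Fin.univ_val_map, Fin.univ_val_map] at h
  have hp : (List.ofFn α).Perm (List.ofFn β) := Multiset.coe_eq_coe.mp h
  set s1 := Tuple.sort α with hs1
  set s2 := Tuple.sort β with hs2
  have h1 : Monotone (α ∘ s1) := Tuple.monotone_sort α
  have h2 : Monotone (β ∘ s2) := Tuple.monotone_sort β
  have hp2 : (List.ofFn (α ∘ s1)).Perm (List.ofFn (β ∘ s2)) :=
    ((s1.ofFn_comp_perm α).trans hp).trans (s2.ofFn_comp_perm β).symm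
  have heq : α ∘ s1 = β ∘ s2 :=
    List.ofFn_inj.mp (List.Perm.eq_of_sortedLE h1.sortedLE_ofFn h2.sortedLE_ofFn hp2)
  refine ⟨s1.symm.trans s2, fun i => ?_⟩
  have h3 := congrFun heq (s1.symm i)
  simpa using h3

lemma exists_le_add {X : Type} [DecidableEq X] {a x y : Multiset X} (h : a ≤ x + y) :
    ∃ b c, b ≤ x ∧ c ≤ y ∧ a = b + c := by
  refine ⟨a - (a - x), a - x, ?_, ?_, ?_⟩
  · rw [Multiset.le_iff_count]; intro e
    have h1 := Multiset.count_le_of_le e h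
    rw [Multiset.count_add] at h1
    simp only [Multiset.count_sub]; omega
  · rw [Multiset.le_iff_count]; intro e
    have h1 := Multiset.count_le_of_le e h
    rw [Multiset.count_add] at h1
    simp only [Multiset.count_sub]; omega
  · ext e
    have h1 := Multiset.count_le_of_le e h
    rw [Multiset.count_add] at h1
    simp only [Multiset.count_sub, Multiset.count_add]; omega

lemma exists_preimage_of_le_map {A B : Type} [DecidableEq A] [DecidableEq B] {g : A → B}
    (hg : Function.Injective g) :
    ∀ (m : Multiset B) (s : Multiset A), m ≤ s.map g → ∃ s', s' ≤ s ∧ m = s'.map g := by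
  intro m
  induction m using Multiset.induction_on with
  | empty => exact fun s _ => ⟨0, by simp, rfl⟩
  | cons a m ih =>
    intro s hle
    have ha : a ∈ s.map g := Multiset.mem_of_le hle (Multiset.mem_cons_self _ _)
    obtain ⟨b, hb, rfl⟩ := Multiset.mem_map.mp ha
    have hm : m ≤ (s.erase b).map g := by
      rw [Multiset.map_erase _ hg]
      have := Multiset.erase_le_erase (g b) hle
      rwa [Multiset.erase_cons_head] at this
    obtain ⟨s', hs', rfl⟩ := ih (s.erase b) hm
    refine ⟨b ::ₘ s', ?_, by simp⟩
    exact (Multiset.cons_le_cons b hs').trans (by rw [Multiset.cons_erase hb])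

lemma sum_singleton_map {ι X : Type} [Fintype ι] (g : ι → X) :
    ∑ i : ι, ({g i} : Multiset X) = Finset.univ.val.map g := by
  rw [Finset.sum_eq_multiset_sum]
  generalize (Finset.univ.val : Multiset ι) = s
  induction s using Multiset.induction_on with
  | empty => simp
  | cons a s ih => simp [ih]

lemma filter_sum_comm {ι X : Type} (s : Finset ι) (p : X → Prop) [DecidablePred p]
    (g : ι → Multiset X) : (∑ i ∈ s, g i).filter p = ∑ i ∈ s, (g i).filter p := by
  classical
  induction s using Finset.induction_on with
  | empty => simp
  | insert _ _ h ih => rw [Finset.sum_insert h, Finset.sum_insert h, Multiset.filter_add, ih]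

lemma map_sum_comm {ι X Y : Type} (s : Finset ι) (h : X → Y) (g : ι → Multiset X) :
    (∑ i ∈ s, g i).map h = ∑ i ∈ s, (g i).map h := by
  classical
  induction s using Finset.induction_on with
  | empty => simp
  | insert _ _ h' ih => rw [Finset.sum_insert h', Finset.sum_insert h', Multiset.map_add, ih]

lemma sum_card_filter_fiber {β ι : Type} [Fintype ι] [DecidableEq ι] (S : Multiset β)
    (φ : β → ι) : ∑ k : ι, (S.filter (fun x => φ x = k)).card = S.card := by
  induction S using Multiset.induction_on with
  | empty => simp
  | cons a s ih =>
    simp only [Multiset.filter_cons, Multiset.card_add, Finset.sum_add_distrib, ih,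
      Multiset.card_cons, apply_ite Multiset.card, Multiset.card_singleton,
      Multiset.card_zero, Finset.sum_ite_eq, Finset.mem_univ, if_true]
    omega

lemma map_product_sum {ι κ X : Type} (s : Multiset ι) (t : Multiset κ) (F : ι × κ → X) :
    (s ×ˢ t).map F = (s.map (fun i => t.map fun m => F (i, m))).sum := by
  induction s using Multiset.induction_on with
  | empty => simp
  | cons a s ih => simp [Multiset.cons_product, ih, Multiset.map_map, Function.comp_def]

lemma map_univ_product {ι κ X : Type} [Fintype ι] [Fintype κ] (F : ι × κ → X) :
    ((Finset.univ : Finset (ι × κ)).val.map F)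
      = ∑ i : ι, (Finset.univ : Finset κ).val.map (fun m => F (i, m)) := by
  rw [← Finset.univ_product_univ, Finset.product_val, map_product_sum, Finset.sum_eq_multiset_sum]

lemma card_filter_univ_unique {ι : Type} [Fintype ι] [DecidableEq ι] (q : ι → Prop)
    [DecidablePred q] (k : ι) (h : ∀ j, q j ↔ j = k) :
    ((Finset.univ.val.filter q).card) = 1 := by
  have : Finset.univ.val.filter q = Finset.univ.val.filter (· = k) :=
    Multiset.filter_congr (fun j _ => by simpa using h j)
  rw [this, Multiset.filter_eq', Multiset.card_replicate]
  simp

end Aux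

section Infra

variable {V : Type} [DecidableEq V] {v : V} {t : ℕ}

/-- The embedding of old vertices into the Meredith extension. -/
def mi (v : V) {t : ℕ} (ht : 0 < t) (x : V) : MeredithV V v t :=
  if h : x = v then Sum.inr (Sum.inl ⟨0, ht⟩) else Sum.inl ⟨x, h⟩

def bip (v : V) {t : ℕ} (p : Fin t × Fin (t - 1)) : Sym2 (MeredithV V v t) :=
  s(Sum.inr (Sum.inl p.1), Sum.inr (Sum.inr p.2))

def pnd (v : V) {t : ℕ} (ht : 0 < t) (f : Fin t → V) (k : Fin t) :
    Sym2 (MeredithV V v t) :=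
  s(mi v ht (f k), Sum.inr (Sum.inl k))

lemma meredith_eq [Fintype V] (E : Multiset (Sym2 V)) (ht : 0 < t) (f : Fin t → V) :
    meredithEdges E v t ht f =
      (E.filter (fun e => v ∉ e)).map (Sym2.map (mi v ht)) +
      Finset.univ.val.map (bip v) + Finset.univ.val.map (pnd v ht f) := rfl

lemma mi_eq_inl_iff {ht : 0 < t} {x y : V} (hy : y ≠ v) :
    mi v ht x = Sum.inl ⟨y, hy⟩ ↔ x = y := by
  unfold mi; split_ifs with h
  · constructor
    · intro hc; simp at hc
    · intro hxy; exact absurd (hxy ▸ h) hy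
  · simp [Sum.inl.injEq, Subtype.ext_iff]

lemma mi_eq_u_iff {ht : 0 < t} {x : V} {k : Fin t} :
    mi v ht x = Sum.inr (Sum.inl k) ↔ x = v ∧ k = ⟨0, ht⟩ := by
  unfold mi; split_ifs with h
  · simp [h, eq_comm]
  · simp [h]

lemma mi_ne_w {ht : 0 < t} {x : V} {m : Fin (t - 1)} :
    mi v ht x ≠ Sum.inr (Sum.inr m) := by
  unfold mi; split_ifs with h
  · intro hc; simp at hc
  · intro hc; exact Sum.inl_ne_inr hc

lemma mi_injective (ht : 0 < t) : Function.Injective (mi v (t := t) ht) := by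
  intro a b hab
  unfold mi at hab
  split_ifs at hab with h1 h2 h2 <;> simp_all [Subtype.ext_iff]

lemma inl_mem_map_mi_iff {ht : 0 < t} {x : V} (hx : x ≠ v) {e : Sym2 V} :
    (Sum.inl ⟨x, hx⟩ : MeredithV V v t) ∈ Sym2.map (mi v ht) e ↔ x ∈ e := by
  rw [Sym2.mem_map]
  constructor
  · rintro ⟨a, ha, haeq⟩
    rwa [(mi_eq_inl_iff hx).mp haeq] at ha
  · intro hxe; exact ⟨x, hxe, by rw [mi_eq_inl_iff hx]⟩

lemma u_not_mem_map_mi {ht : 0 < t} {k : Fin t} {e : Sym2 V} (he : v ∉ e) :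
    (Sum.inr (Sum.inl k) : MeredithV V v t) ∉ Sym2.map (mi v ht) e := by
  rw [Sym2.mem_map]
  rintro ⟨a, ha, haeq⟩
  exact he (((mi_eq_u_iff (ht := ht)).mp haeq).1 ▸ ha)

lemma w_not_mem_map_mi {ht : 0 < t} {m : Fin (t - 1)} {e : Sym2 V} :
    (Sum.inr (Sum.inr m) : MeredithV V v t) ∉ Sym2.map (mi v ht) e := by
  rw [Sym2.mem_map]
  rintro ⟨a, ha, haeq⟩
  exact mi_ne_w haeq

lemma bip_injective : Function.Injective (bip v (t := t)) := by
  rintro ⟨a, b⟩ ⟨c, d⟩ h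
  unfold bip at h
  rw [Sym2.eq_iff] at h
  rcases h with ⟨h1, h2⟩ | ⟨h1, h2⟩
  · simp_all
  · exact absurd h1 (by simp)

lemma mem_bip_iff {y : MeredithV V v t} {p : Fin t × Fin (t - 1)} :
    y ∈ bip v p ↔ y = Sum.inr (Sum.inl p.1) ∨ y = Sum.inr (Sum.inr p.2) := by
  unfold bip; rw [Sym2.mem_iff]

lemma pnd_eq {ht : 0 < t} {f : Fin t → V} (hf : ∀ i, f i ≠ v) (k : Fin t) :
    pnd v ht f k = s(Sum.inl ⟨f k, hf k⟩, Sum.inr (Sum.inl k)) := by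
  unfold pnd mi; rw [dif_neg (hf k)]

lemma pnd_injective {ht : 0 < t} {f : Fin t → V} (hf : ∀ i, f i ≠ v) :
    Function.Injective (pnd v ht f) := by
  intro a b h
  rw [pnd_eq hf, pnd_eq hf, Sym2.eq_iff] at h
  rcases h with ⟨h1, h2⟩ | ⟨h1, h2⟩
  · simpa using h2
  · exact absurd h1 (by simp)

end Infra

section Partner

variable {t : ℕ}

/-- `emb m = m + 1` as an element of `Fin t`. -/
def femb (ht2 : 2 ≤ t) (m : Fin (t - 1)) : Fin t :=
  ⟨m.val + 1, by have := m.isLt; omega⟩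

lemma femb_injective (ht2 : 2 ≤ t) : Function.Injective (femb ht2) := by
  intro a b h
  have := congrArg Fin.val h
  simp only [femb] at this
  exact Fin.ext (by omega)

lemma femb_ne_zero (ht2 : 2 ≤ t) (m : Fin (t - 1)) :
    haveI : NeZero t := ⟨by omega⟩
    femb ht2 m ≠ 0 := by
  haveI : NeZero t := ⟨by omega⟩
  intro h
  have := congrArg Fin.val h
  simp [femb, Fin.val_zero] at this

lemma femb_surj (ht2 : 2 ≤ t) (c : Fin t)
    (hc : c ≠ ⟨0, Nat.lt_of_lt_of_le Nat.zero_lt_two ht2⟩) : ∃ m, femb ht2 m = c := by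
  have h1 : c.val ≠ 0 := fun h => hc (Fin.ext h)
  have h2 := c.isLt
  exact ⟨⟨c.val - 1, by omega⟩, Fin.ext (by simp [femb]; omega)⟩

/-- partner of `w_m` in the `i`-th matching of the gadget. -/
def partner (ht2 : 2 ≤ t) (i : Fin t) (m : Fin (t - 1)) : Fin t :=
  haveI : NeZero t := ⟨by omega⟩
  i + femb ht2 m

lemma partner_ne (ht2 : 2 ≤ t) (i : Fin t) (m : Fin (t - 1)) :
    partner ht2 i m ≠ i := by
  haveI : NeZero t := ⟨by omega⟩
  unfold partner
  intro h
  have h0 : femb ht2 m = 0 := by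
    have := congrArg (fun z => z - i) h
    simpa [add_comm, add_sub_cancel_right] using this
  exact femb_ne_zero ht2 m h0

lemma partner_left_inj (ht2 : 2 ≤ t) {i j : Fin t} {m : Fin (t - 1)}
    (h : partner ht2 i m = partner ht2 j m) : i = j := by
  haveI : NeZero t := ⟨by omega⟩
  unfold partner at h
  exact add_right_cancel h

lemma partner_eq_iff (ht2 : 2 ≤ t) (i k : Fin t) (hk : k ≠ i) :
    ∃ m0 : Fin (t - 1), ∀ m, partner ht2 i m = k ↔ m = m0 := by
  haveI : NeZero t := ⟨by omega⟩
  have hsub : k - i ≠ ⟨0, Nat.lt_of_lt_of_le Nat.zero_lt_two ht2⟩ := by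
    intro h
    apply hk
    have : k - i = 0 := by simpa using h
    have := sub_eq_zero.mp this
    exact this
  obtain ⟨m0, hm0⟩ := femb_surj ht2 (k - i) hsub
  refine ⟨m0, fun m => ?_⟩
  unfold partner
  constructor
  · intro h
    apply femb_injective ht2
    rw [hm0, eq_sub_iff_add_eq, add_comm]
    exact h
  · rintro rfl
    rw [hm0]
    simp [add_sub_cancel]

end Partner

section Forward

variable {V : Type} [Fintype V] [DecidableEq V]

set_option maxHeartbeats 1000000 in
lemma meredith_forward (E : Multiset (Sym2 V)) (v : V) {t : ℕ} (ht2 : 2 ≤ t)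
    (ht0 : 0 < t) (f : Fin t → V) (hf : ∀ i, f i ≠ v)
    (hdeg : E.filter (fun e => v ∈ e) =
      (Finset.univ : Finset (Fin t)).val.map (fun i => s(v, f i)))
    (N : Fin t → Multiset (Sym2 V)) (hN : ∀ i, IsPMOf E (N i))
    (hsum : (∑ i, N i) ≤ E) :
    ∃ M : Fin t → Multiset (Sym2 (MeredithV V v t)),
      (∀ i, IsPMOf (meredithEdges E v t ht0 f) (M i)) ∧
      (∑ i, M i) ≤ meredithEdges E v t ht0 f := by
  haveI : NeZero t := ⟨by omega⟩
  -- extract the edge at v of each matching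
  have hech : ∀ i, ∃ a, (N i).filter (fun e => v ∈ e) = {a} :=
    fun i => Multiset.card_eq_one.mp ((hN i).2 v)
  choose e0 he0 using hech
  have hmapeq : Finset.univ.val.map e0 = Finset.univ.val.map (fun i => s(v, f i)) := by
    have h1 : ∑ i, (N i).filter (fun e => v ∈ e) ≤ E.filter (fun e => v ∈ e) := by
      rw [← filter_sum_comm]
      exact Multiset.filter_le_filter _ hsum
    rw [hdeg] at h1
    have h2 : ∑ i, (N i).filter (fun e => v ∈ e) = Finset.univ.val.map e0 := by
      rw [← sum_singleton_map]
      exact Finset.sum_congr rfl (fun i _ => he0 i)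
    rw [h2] at h1
    exact Multiset.eq_of_le_of_card_le h1 (by simp)
  obtain ⟨σ, hσ⟩ := exists_perm_of_map_eq e0 (fun i => s(v, f i)) hmapeq
  -- reindexed matchings
  set P : Fin t → Multiset (Sym2 V) := fun j => N (σ.symm j) with hPdef
  have hPM : ∀ j, IsPMOf E (P j) := fun j => hN _
  have hPfil : ∀ j, (P j).filter (fun e => v ∈ e) = {s(v, f j)} := by
    intro j
    show (N (σ.symm j)).filter (fun e => v ∈ e) = _
    rw [he0 (σ.symm j), hσ (σ.symm j), Equiv.apply_symm_apply]
  have hPsum : ∑ j, P j ≤ E := by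
    have h3 : ∑ j, P j = ∑ i, N i := Equiv.sum_comp σ.symm N
    rw [h3]; exact hsum
  -- the new matchings
  set M : Fin t → Multiset (Sym2 (MeredithV V v t)) := fun i =>
    ((P i).filter (fun e => v ∉ e)).map (Sym2.map (mi v ht0))
    + Finset.univ.val.map (fun m => bip v (partner ht2 i m, m))
    + {pnd v ht0 f i} with hMdef
  -- coverage of old vertices inside P i away from v
  have hcov : ∀ (i : Fin t) (x : V), x ≠ v →
      (((P i).filter (fun e => v ∉ e)).filter (fun e => x ∈ e)).card
        + (if x = f i then 1 else 0) = 1 := by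
    intro i x hx
    have h1 := (hPM i).2 x
    have hsplit : (P i).filter (fun e => x ∈ e) =
        (({s(v, f i)} : Multiset (Sym2 V)).filter (fun e => x ∈ e))
          + (((P i).filter (fun e => v ∉ e)).filter (fun e => x ∈ e)) := by
      conv_lhs => rw [← Multiset.filter_add_not (fun e => v ∈ e) (P i)]
      rw [Multiset.filter_add, hPfil i]
    rw [hsplit, Multiset.card_add, Multiset.filter_singleton] at h1
    have hx2 : (x ∈ s(v, f i)) ↔ x = f i := by
      simp only [Sym2.mem_iff]
      constructor
      · rintro (rfl | rfl)
        · exact absurd rfl hx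
        · rfl
      · intro h
        right
        exact h
    have h1' : (if x = f i then 1 else 0)
        + (((P i).filter (fun e => v ∉ e)).filter (fun e => x ∈ e)).card = 1 := by
      by_cases hxx : x = f i
      · rw [if_pos (hx2.mpr hxx)] at h1
        simp only [Multiset.card_singleton] at h1
        rw [if_pos hxx]
        omega
      · rw [if_neg (fun h => hxx (hx2.mp h))] at h1
        simp only [Multiset.empty_eq_zero, Multiset.card_zero] at h1
        rw [if_neg hxx]
        omega
    omega
  refine ⟨M, fun i => ⟨?_, ?_⟩, ?_⟩
  · -- M i ≤ meredithEdges
    rw [meredith_eq]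
    refine add_le_add (add_le_add ?_ ?_) ?_
    · exact Multiset.map_le_map (Multiset.filter_le_filter _ (hPM i).1)
    · have h4 : Finset.univ.val.map (fun m => bip v (partner ht2 i m, m))
          = Multiset.map (bip v)
            (Finset.univ.val.map (fun m => ((partner ht2 i m, m) : Fin t × Fin (t - 1)))) := by
        rw [Multiset.map_map]; rfl
      rw [h4]
      refine Multiset.map_le_map ?_
      have hnd : (Finset.univ.val.map
          (fun m => ((partner ht2 i m, m) : Fin t × Fin (t - 1)))).Nodup := by
        refine Multiset.Nodup.map ?_ Finset.univ.nodup
        intro a b hab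
        exact (Prod.mk.injEq _ _ _ _).mp hab |>.2
      rw [Multiset.le_iff_subset hnd]
      intro p _
      simp
    · rw [Multiset.singleton_le]
      exact Multiset.mem_map.mpr ⟨i, by simp, rfl⟩
  · -- coverage in M i
    intro y
    rw [hMdef]
    simp only
    rw [Multiset.filter_add, Multiset.filter_add, Multiset.card_add, Multiset.card_add]
    rcases y with ⟨x, hx⟩ | k | m
    · -- old vertex x
      have hcard1 : ((((P i).filter (fun e => v ∉ e)).map (Sym2.map (mi v ht0))).filter
          (fun e => (Sum.inl ⟨x, hx⟩ : MeredithV V v t) ∈ e)).card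
          = (((P i).filter (fun e => v ∉ e)).filter (fun e => x ∈ e)).card := by
        rw [Multiset.filter_map, Multiset.card_map]
        congr 1
        refine Multiset.filter_congr (fun e he => ?_)
        simpa [Function.comp] using inl_mem_map_mi_iff (v := v) (ht := ht0) hx (e := e)
      have hcard2 : ((Finset.univ.val.map (fun m => bip v (partner ht2 i m, m))).filter
          (fun e => (Sum.inl ⟨x, hx⟩ : MeredithV V v t) ∈ e)).card = 0 := by
        rw [Multiset.card_eq_zero, Multiset.filter_eq_nil]
        rintro e he hmem
        obtain ⟨m, _, rfl⟩ := Multiset.mem_map.mp he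
        rw [mem_bip_iff] at hmem
        rcases hmem with h | h <;> exact Sum.inl_ne_inr h
      have hcard3 : ((({pnd v ht0 f i} : Multiset (Sym2 (MeredithV V v t)))).filter
          (fun e => (Sum.inl ⟨x, hx⟩ : MeredithV V v t) ∈ e)).card
          = if x = f i then 1 else 0 := by
        rw [Multiset.filter_singleton, pnd_eq hf, apply_ite Multiset.card]
        congr 1
        simp only [Sym2.mem_iff, eq_iff_iff]
        constructor
        · rintro (h | h)
          · exact Subtype.ext_iff.mp (Sum.inl.injEq _ _ ▸ h)
          · exact absurd h (by simp)
        · intro h; left; exact congrArg Sum.inl (Subtype.ext h)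
      rw [hcard1, hcard2, hcard3]
      have hc := hcov i x hx
      rcases eq_or_ne x (f i) with hxx | hxx
      · rw [if_pos hxx] at hc ⊢; omega
      · rw [if_neg hxx] at hc ⊢; omega
    · -- vertex u_k
      have hcard1 : ((((P i).filter (fun e => v ∉ e)).map (Sym2.map (mi v ht0))).filter
          (fun e => (Sum.inr (Sum.inl k) : MeredithV V v t) ∈ e)).card = 0 := by
        rw [Multiset.card_eq_zero, Multiset.filter_eq_nil]
        rintro e he hmem
        obtain ⟨e', he', rfl⟩ := Multiset.mem_map.mp he
        exact u_not_mem_map_mi (Multiset.mem_filter.mp he').2 hmem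
      have hcard3 : ((({pnd v ht0 f i} : Multiset (Sym2 (MeredithV V v t)))).filter
          (fun e => (Sum.inr (Sum.inl k) : MeredithV V v t) ∈ e)).card
          = if k = i then 1 else 0 := by
        rw [Multiset.filter_singleton, pnd_eq hf, apply_ite Multiset.card]
        congr 1
        simp only [Sym2.mem_iff, eq_iff_iff]
        constructor
        · rintro (h | h)
          · exact absurd h (by simp)
          · simpa using h
        · intro h; right; exact by simp [h]
      have hcard2 : ((Finset.univ.val.map (fun m => bip v (partner ht2 i m, m))).filter
          (fun e => (Sum.inr (Sum.inl k) : MeredithV V v t) ∈ e)).card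
          = if k = i then 0 else 1 := by
        rw [Multiset.filter_map, Multiset.card_map]
        have hpred : ∀ m : Fin (t - 1),
            ((fun e => (Sum.inr (Sum.inl k) : MeredithV V v t) ∈ e) ∘
              (fun m => bip v (partner ht2 i m, m))) m ↔ partner ht2 i m = k := by
          intro m
          simp only [Function.comp, mem_bip_iff]
          constructor
          · rintro (h | h)
            · exact (by simpa using h.symm)
            · exact absurd h (by simp)
          · intro h; left; simp [h]
        by_cases hk : k = i
        · subst hk
          rw [if_pos rfl, Multiset.card_eq_zero, Multiset.filter_eq_nil]
          intro m _ hm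
          exact partner_ne ht2 k m ((hpred m).mp hm)
        · obtain ⟨m0, hm0⟩ := partner_eq_iff ht2 i k hk
          rw [if_neg hk]
          refine card_filter_univ_unique _ m0 (fun m => ?_)
          rw [← hm0 m]
          exact hpred m
      rw [hcard1, hcard2, hcard3]
      by_cases hk : k = i <;> simp [hk]
    · -- vertex w_m
      have hcard1 : ((((P i).filter (fun e => v ∉ e)).map (Sym2.map (mi v ht0))).filter
          (fun e => (Sum.inr (Sum.inr m) : MeredithV V v t) ∈ e)).card = 0 := by
        rw [Multiset.card_eq_zero, Multiset.filter_eq_nil]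
        rintro e he hmem
        obtain ⟨e', he', rfl⟩ := Multiset.mem_map.mp he
        exact w_not_mem_map_mi hmem
      have hcard2 : ((Finset.univ.val.map (fun m' => bip v (partner ht2 i m', m'))).filter
          (fun e => (Sum.inr (Sum.inr m) : MeredithV V v t) ∈ e)).card = 1 := by
        rw [Multiset.filter_map, Multiset.card_map]
        refine card_filter_univ_unique _ m (fun m' => ?_)
        simp only [Function.comp, mem_bip_iff]
        constructor
        · rintro (h | h)
          · exact absurd h (by simp)
          · simpa [eq_comm] using h
        · rintro rfl; right; rfl
      have hcard3 : ((({pnd v ht0 f i} : Multiset (Sym2 (MeredithV V v t)))).filter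
          (fun e => (Sum.inr (Sum.inr m) : MeredithV V v t) ∈ e)).card = 0 := by
        rw [Multiset.filter_singleton, pnd_eq hf]
        rw [if_neg]
        · rfl
        · simp only [Sym2.mem_iff]
          rintro (h | h) <;> simp at h
      rw [hcard1, hcard2, hcard3]
  · -- disjointness
    rw [meredith_eq]
    have hsplit : ∑ i, M i =
        (∑ i, ((P i).filter (fun e => v ∉ e)).map (Sym2.map (mi v ht0)))
        + (∑ i, Finset.univ.val.map (fun m => bip v (partner ht2 i m, m)))
        + (∑ i, ({pnd v ht0 f i} : Multiset (Sym2 (MeredithV V v t)))) := by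
      rw [hMdef, Finset.sum_add_distrib, Finset.sum_add_distrib]
    rw [hsplit]
    refine add_le_add (add_le_add ?_ ?_) ?_
    · rw [← map_sum_comm, ← filter_sum_comm]
      exact Multiset.map_le_map (Multiset.filter_le_filter _ hPsum)
    · -- bipartite part is exactly used up
      have hbij : Function.Bijective
          (fun p : Fin t × Fin (t - 1) => ((partner ht2 p.1 p.2, p.2) : Fin t × Fin (t - 1))) := by
        rw [← Finite.injective_iff_bijective]
        rintro ⟨a, b⟩ ⟨c, d⟩ h
        obtain ⟨h1, h2⟩ := Prod.mk.injEq _ _ _ _ ▸ h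
        have hbd : b = d := h2
        subst hbd
        exact Prod.ext (partner_left_inj ht2 h1) rfl
      set Φ : (Fin t × Fin (t - 1)) ≃ (Fin t × Fin (t - 1)) := Equiv.ofBijective _ hbij with hΦ
      have huniv : Finset.univ.val.map (fun p : Fin t × Fin (t - 1) =>
          ((partner ht2 p.1 p.2, p.2) : Fin t × Fin (t - 1))) = Finset.univ.val := by
        have h5 := Finset.map_univ_equiv Φ
        have h6 := congrArg Finset.val h5
        rw [Finset.map_val] at h6
        exact h6
      have h7 : (Finset.univ.val.map (bip v) : Multiset (Sym2 (MeredithV V v t)))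
          = Finset.univ.val.map (fun p : Fin t × Fin (t - 1) =>
              bip v (partner ht2 p.1 p.2, p.2)) := by
        conv_lhs => rw [← huniv]
        rw [Multiset.map_map]
        rfl
      rw [h7, map_univ_product (fun p : Fin t × Fin (t - 1) => bip v (partner ht2 p.1 p.2, p.2))]
    · rw [sum_singleton_map]
end Forward

section Backward

variable {V : Type} [Fintype V] [DecidableEq V]

set_option maxHeartbeats 1600000 in
lemma meredith_backward (E : Multiset (Sym2 V)) (v : V) {t : ℕ} (ht2 : 2 ≤ t)
    (ht0 : 0 < t) (f : Fin t → V) (hf : ∀ i, f i ≠ v)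
    (hdeg : E.filter (fun e => v ∈ e) =
      (Finset.univ : Finset (Fin t)).val.map (fun i => s(v, f i)))
    (M : Fin t → Multiset (Sym2 (MeredithV V v t)))
    (hM : ∀ i, IsPMOf (meredithEdges E v t ht0 f) (M i))
    (hsum : (∑ i, M i) ≤ meredithEdges E v t ht0 f) :
    ∃ N : Fin t → Multiset (Sym2 V), (∀ i, IsPMOf E (N i)) ∧ (∑ i, N i) ≤ E := by
  haveI : NeZero t := ⟨by omega⟩
  have hmiinj : Function.Injective (Sym2.map (mi v (t := t) ht0)) :=
    Sym2.map.injective (mi_injective ht0)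
  -- decompose each matching
  have key : ∀ i, ∃ (So : Multiset (Sym2 V)) (k : Fin t)
      (mb : Multiset (Sym2 (MeredithV V v t))),
      So ≤ E.filter (fun e => v ∉ e) ∧ mb ≤ Finset.univ.val.map (bip v) ∧
      M i = So.map (Sym2.map (mi v ht0)) + mb + {pnd v ht0 f k} := by
    intro i
    have h0 : M i ≤ (E.filter (fun e => v ∉ e)).map (Sym2.map (mi v ht0))
        + Finset.univ.val.map (bip v) + Finset.univ.val.map (pnd v ht0 f) := by
      have := (hM i).1
      rwa [meredith_eq] at this
    obtain ⟨q, mp, hq, hmp, hMi⟩ := exists_le_add h0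
    obtain ⟨mo, mb, hmo, hmb, hq2⟩ := exists_le_add hq
    obtain ⟨So, hSo, hmoeq⟩ := exists_preimage_of_le_map hmiinj mo _ hmo
    obtain ⟨Sb, hSb, hmbeq⟩ := exists_preimage_of_le_map (bip_injective (v := v)) mb _ hmb
    obtain ⟨Sp, hSp, hmpeq⟩ := exists_preimage_of_le_map (pnd_injective hf) mp _ hmp
    -- generic coverage split
    have hcovgen : ∀ y : MeredithV V v t,
        ((mo.filter (fun e => y ∈ e)).card + (mb.filter (fun e => y ∈ e)).card)
          + (mp.filter (fun e => y ∈ e)).card = 1 := by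
      intro y
      have h1 := (hM i).2 y
      rw [hMi, hq2, Multiset.filter_add, Multiset.filter_add, Multiset.card_add,
        Multiset.card_add] at h1
      exact h1
    have hmo0 : ∀ y : MeredithV V v t, (∀ (e' : Sym2 V), v ∉ e' →
        y ∉ Sym2.map (mi v ht0) e') → (mo.filter (fun e => y ∈ e)).card = 0 := by
      intro y hy
      rw [Multiset.card_eq_zero, Multiset.filter_eq_nil]
      intro e he hmem
      have hee := Multiset.mem_of_le hmo he
      obtain ⟨e', he', rfl⟩ := Multiset.mem_map.mp hee
      exact hy e' (Multiset.mem_filter.mp he').2 hmem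
    -- coverage of w_m : picks out the fibers of Sb over the second coordinate
    have hcovw : ∀ m : Fin (t - 1), (Sb.filter (fun p => Prod.snd p = m)).card = 1 := by
      intro m
      have h1 := hcovgen (Sum.inr (Sum.inr m))
      rw [hmo0 _ (fun e' he' => w_not_mem_map_mi)] at h1
      have h2 : (mp.filter (fun e => (Sum.inr (Sum.inr m) : MeredithV V v t) ∈ e)).card
          = 0 := by
        rw [Multiset.card_eq_zero, Multiset.filter_eq_nil]
        intro e he hmem
        rw [hmpeq] at he
        obtain ⟨j, _, rfl⟩ := Multiset.mem_map.mp he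
        rw [pnd_eq hf, Sym2.mem_iff] at hmem
        rcases hmem with h | h <;> simp at h
      have h3 : (mb.filter (fun e => (Sum.inr (Sum.inr m) : MeredithV V v t) ∈ e)).card
          = (Sb.filter (fun p => Prod.snd p = m)).card := by
        rw [hmbeq, Multiset.filter_map, Multiset.card_map]
        congr 1
        refine Multiset.filter_congr (fun p _ => ?_)
        simp only [Function.comp, mem_bip_iff]
        constructor
        · rintro (h | h)
          · exact absurd h (by simp)
          · simpa [eq_comm] using h
        · intro h; right; rw [h]
      rw [h2, h3] at h1
      omega
    -- coverage of u_k
    have hcovu : ∀ k : Fin t, (Sb.filter (fun p => Prod.fst p = k)).card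
        + (Sp.filter (fun j => j = k)).card = 1 := by
      intro k
      have h1 := hcovgen (Sum.inr (Sum.inl k))
      rw [hmo0 _ (fun e' he' => u_not_mem_map_mi he')] at h1
      have h3 : (mb.filter (fun e => (Sum.inr (Sum.inl k) : MeredithV V v t) ∈ e)).card
          = (Sb.filter (fun p => Prod.fst p = k)).card := by
        rw [hmbeq, Multiset.filter_map, Multiset.card_map]
        congr 1
        refine Multiset.filter_congr (fun p _ => ?_)
        simp only [Function.comp, mem_bip_iff]
        constructor
        · rintro (h | h)
          · simpa [eq_comm] using h
          · exact absurd h (by simp)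
        · intro h; left; rw [h]
      have h4 : (mp.filter (fun e => (Sum.inr (Sum.inl k) : MeredithV V v t) ∈ e)).card
          = (Sp.filter (fun j => j = k)).card := by
        rw [hmpeq, Multiset.filter_map, Multiset.card_map]
        congr 1
        refine Multiset.filter_congr (fun j _ => ?_)
        simp only [Function.comp]
        rw [pnd_eq hf, Sym2.mem_iff]
        constructor
        · rintro (h | h)
          · exact absurd h (by simp)
          · simpa [eq_comm] using h
        · intro h; right; rw [h]
      rw [h3, h4] at h1
      omega
    -- cardinalities
    have hSbcard : Sb.card = t - 1 := by
      have h5 := sum_card_filter_fiber Sb Prod.snd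
      have h6 : ∑ m : Fin (t - 1), (Sb.filter (fun p => Prod.snd p = m)).card
          = ∑ _m : Fin (t - 1), 1 := Finset.sum_congr rfl (fun m _ => hcovw m)
      rw [h5] at h6
      simpa using h6
    have hSpcard : Sp.card = 1 := by
      have h5 := sum_card_filter_fiber Sb Prod.fst
      have h5' := sum_card_filter_fiber Sp id
      have h6 : ∑ k : Fin t, ((Sb.filter (fun p => Prod.fst p = k)).card
          + (Sp.filter (fun j => j = k)).card) = ∑ _k : Fin t, 1 :=
        Finset.sum_congr rfl (fun k _ => hcovu k)
      rw [Finset.sum_add_distrib, h5] at h6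
      have h7 : ∑ k : Fin t, (Sp.filter (fun j => j = k)).card = Sp.card := by
        rw [← h5']
        exact Finset.sum_congr rfl (fun k _ => by simp [id])
      rw [h7] at h6
      simp only [Finset.sum_const, Finset.card_univ, Fintype.card_fin, smul_eq_mul,
        mul_one] at h6
      omega
    obtain ⟨k0, hk0⟩ := Multiset.card_eq_one.mp hSpcard
    refine ⟨So, k0, mb, hSo, hmb, ?_⟩
    rw [hMi, hq2, hmoeq, hmpeq, hk0]
    simp
  choose So τ mb hSo hmb hMeq using key
  -- each matching contains its pendant edge
  have hpend_mem : ∀ i, pnd v ht0 f (τ i) ∈ M i := by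
    intro i
    rw [hMeq i]
    simp
  -- pendant edges appear exactly once in G_v
  have hpcount : ∀ k, Multiset.count (pnd v ht0 f k) (meredithEdges E v t ht0 f) = 1 := by
    intro k
    rw [meredith_eq, Multiset.count_add, Multiset.count_add]
    have c1 : Multiset.count (pnd v ht0 f k)
        ((E.filter (fun e => v ∉ e)).map (Sym2.map (mi v ht0))) = 0 := by
      rw [Multiset.count_eq_zero]
      intro hmem
      obtain ⟨e', he', heq⟩ := Multiset.mem_map.mp hmem
      have : (Sum.inr (Sum.inl k) : MeredithV V v t) ∈ Sym2.map (mi v ht0) e' := by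
        rw [heq, pnd_eq hf, Sym2.mem_iff]; right; rfl
      exact u_not_mem_map_mi (Multiset.mem_filter.mp he').2 this
    have c2 : Multiset.count (pnd v ht0 f k) (Finset.univ.val.map (bip v)) = 0 := by
      rw [Multiset.count_eq_zero]
      intro hmem
      obtain ⟨p, _, heq⟩ := Multiset.mem_map.mp hmem
      have : (Sum.inl ⟨f k, hf k⟩ : MeredithV V v t) ∈ bip v p := by
        rw [heq, pnd_eq hf, Sym2.mem_iff]; left; rfl
      rw [mem_bip_iff] at this
      rcases this with h | h <;> simp at h
    have c3 : Multiset.count (pnd v ht0 f k) (Finset.univ.val.map (pnd v ht0 f)) = 1 := by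
      have hcme := Multiset.count_map_eq_count' (pnd v ht0 f) Finset.univ.val
        (pnd_injective hf) k
      rw [hcme]
      exact Multiset.count_eq_one_of_mem Finset.univ.nodup (by simp)
    rw [c1, c2, c3]
  -- τ is injective, hence bijective
  have hτinj : Function.Injective τ := by
    intro i j hij
    by_contra hne
    have hcle : Multiset.count (pnd v ht0 f (τ i)) (∑ k, M k) ≤ 1 :=
      (Multiset.count_le_of_le _ hsum).trans (le_of_eq (hpcount (τ i)))
    have h2 : (2 : ℕ) ≤ ∑ k, Multiset.count (pnd v ht0 f (τ i)) (M k) := by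
      have hle : Multiset.count (pnd v ht0 f (τ i)) (M i)
          + Multiset.count (pnd v ht0 f (τ i)) (M j)
          ≤ ∑ k, Multiset.count (pnd v ht0 f (τ i)) (M k) := by
        have hss := Finset.sum_le_sum_of_subset
          (f := fun k => Multiset.count (pnd v ht0 f (τ i)) (M k))
          (Finset.subset_univ ({i, j} : Finset (Fin t)))
        rwa [Finset.sum_pair hne] at hss
      have hi : 1 ≤ Multiset.count (pnd v ht0 f (τ i)) (M i) :=
        Multiset.one_le_count_iff_mem.mpr (hpend_mem i)
      have hj : 1 ≤ Multiset.count (pnd v ht0 f (τ i)) (M j) := by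
        rw [hij]
        exact Multiset.one_le_count_iff_mem.mpr (hpend_mem j)
      omega
    rw [← Multiset.count_sum'] at h2
    omega
  have hτbij : Function.Bijective τ := Finite.injective_iff_bijective.mp hτinj
  have hτuniv : Finset.univ.val.map τ = Finset.univ.val := by
    have h5 := Finset.map_univ_equiv (Equiv.ofBijective τ hτbij)
    have h6 := congrArg Finset.val h5
    rw [Finset.map_val] at h6
    exact h6
  -- the old matchings
  refine ⟨fun i => So i + {s(v, f (τ i))}, fun i => ⟨?_, ?_⟩, ?_⟩
  · -- N i ≤ E
    have h7 : So i + ({s(v, f (τ i))} : Multiset (Sym2 V)) ≤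
        E.filter (fun e => v ∉ e) + E.filter (fun e => v ∈ e) := by
      refine add_le_add (hSo i) ?_
      rw [Multiset.singleton_le, hdeg]
      exact Multiset.mem_map.mpr ⟨τ i, by simp, rfl⟩
    rwa [add_comm (E.filter _), Multiset.filter_add_not] at h7
  · -- coverage
    intro x
    rw [Multiset.filter_add, Multiset.card_add]
    by_cases hx : x = v
    · subst hx
      have c1 : ((So i).filter (fun e => x ∈ e)).card = 0 := by
        rw [Multiset.card_eq_zero, Multiset.filter_eq_nil]
        intro e he hmem
        have hee := Multiset.mem_of_le (hSo i) he
        exact (Multiset.mem_filter.mp hee).2 hmem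
      have c2 : (({s(x, f (τ i))} : Multiset (Sym2 V)).filter (fun e => x ∈ e)).card
          = 1 := by
        rw [Multiset.filter_singleton, if_pos (by simp)]
        simp
      rw [c1, c2]
    · have h1 := (hM i).2 (Sum.inl ⟨x, hx⟩ : MeredithV V v t)
      rw [hMeq i, Multiset.filter_add, Multiset.filter_add, Multiset.card_add,
        Multiset.card_add] at h1
      have c1 : (((So i).map (Sym2.map (mi v ht0))).filter
          (fun e => (Sum.inl ⟨x, hx⟩ : MeredithV V v t) ∈ e)).card
          = ((So i).filter (fun e => x ∈ e)).card := by
        rw [Multiset.filter_map, Multiset.card_map]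
        congr 1
        refine Multiset.filter_congr (fun e _ => ?_)
        simpa [Function.comp] using inl_mem_map_mi_iff (v := v) (ht := ht0) hx (e := e)
      have c2 : ((mb i).filter
          (fun e => (Sum.inl ⟨x, hx⟩ : MeredithV V v t) ∈ e)).card = 0 := by
        rw [Multiset.card_eq_zero, Multiset.filter_eq_nil]
        intro e he hmem
        have hee := Multiset.mem_of_le (hmb i) he
        obtain ⟨p, _, rfl⟩ := Multiset.mem_map.mp hee
        rw [mem_bip_iff] at hmem
        rcases hmem with h | h <;> simp at h
      have c3 : ((({pnd v ht0 f (τ i)} : Multiset (Sym2 (MeredithV V v t)))).filter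
          (fun e => (Sum.inl ⟨x, hx⟩ : MeredithV V v t) ∈ e)).card
          = if x = f (τ i) then 1 else 0 := by
        rw [Multiset.filter_singleton, pnd_eq hf, apply_ite Multiset.card]
        congr 1
        simp only [Sym2.mem_iff, eq_iff_iff]
        constructor
        · rintro (h | h)
          · exact Subtype.ext_iff.mp (Sum.inl.injEq _ _ ▸ h)
          · exact absurd h (by simp)
        · intro h; left; exact congrArg Sum.inl (Subtype.ext h)
      rw [c1, c2, c3] at h1
      have c4 : (({s(v, f (τ i))} : Multiset (Sym2 V)).filter (fun e => x ∈ e)).card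
          = if x = f (τ i) then 1 else 0 := by
        rw [Multiset.filter_singleton, apply_ite Multiset.card]
        congr 1
        simp only [Sym2.mem_iff, eq_iff_iff]
        constructor
        · rintro (h | h)
          · exact absurd h hx
          · exact h
        · intro h; right; exact h
      rw [c4]
      rcases eq_or_ne x (f (τ i)) with hxx | hxx
      · rw [if_pos hxx] at h1 ⊢; omega
      · rw [if_neg hxx] at h1 ⊢; omega
  · -- disjointness
    rw [Finset.sum_add_distrib]
    have hp2 : ∑ i, ({s(v, f (τ i))} : Multiset (Sym2 V))
        = E.filter (fun e => v ∈ e) := by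
      rw [sum_singleton_map, hdeg]
      have hmm : (Finset.univ.val.map (fun i => s(v, f (τ i)))) =
          (Finset.univ.val.map τ).map (fun k => s(v, f k)) := by
        rw [Multiset.map_map]; rfl
      rw [hmm, hτuniv]
    have hp1 : ∑ i, So i ≤ E.filter (fun e => v ∉ e) := by
      rw [← Multiset.map_le_map_iff hmiinj, map_sum_comm, Multiset.le_iff_count]
      intro e
      by_cases hmem : e ∈ ∑ i, (So i).map (Sym2.map (mi v ht0))
      · obtain ⟨i0, _, hei⟩ := Multiset.mem_sum.mp hmem
        obtain ⟨e', he', rfl⟩ := Multiset.mem_map.mp hei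
        have hve' : v ∉ e' :=
          (Multiset.mem_filter.mp (Multiset.mem_of_le (hSo i0) he')).2
        have cb : Multiset.count (Sym2.map (mi v ht0) e')
            (Finset.univ.val.map (bip v)) = 0 := by
          rw [Multiset.count_eq_zero]
          intro hc
          obtain ⟨p, _, hpe⟩ := Multiset.mem_map.mp hc
          have hw : (Sum.inr (Sum.inr p.2) : MeredithV V v t)
              ∈ Sym2.map (mi v ht0) e' := by
            rw [← hpe, mem_bip_iff]; right; rfl
          exact w_not_mem_map_mi hw
        have cp : Multiset.count (Sym2.map (mi v ht0) e')
            (Finset.univ.val.map (pnd v ht0 f)) = 0 := by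
          rw [Multiset.count_eq_zero]
          intro hc
          obtain ⟨j, _, hpe⟩ := Multiset.mem_map.mp hc
          have hu : (Sum.inr (Sum.inl j) : MeredithV V v t)
              ∈ Sym2.map (mi v ht0) e' := by
            rw [← hpe, pnd_eq hf, Sym2.mem_iff]; right; rfl
          exact u_not_mem_map_mi hve' hu
        have hle1 : ∑ i, (So i).map (Sym2.map (mi v ht0)) ≤ ∑ i, M i :=
          Finset.sum_le_sum (fun i _ => by
            rw [hMeq i]
            exact le_add_right (le_add_right le_rfl))
        have hc2 := Multiset.count_le_of_le (Sym2.map (mi v ht0) e') (hle1.trans hsum)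
        rw [meredith_eq, Multiset.count_add, Multiset.count_add, cb, cp] at hc2
        omega
      · rw [Multiset.count_eq_zero_of_notMem hmem]
        exact Nat.zero_le _
    have htotal := add_le_add hp1 (le_of_eq hp2)
    rwa [add_comm (E.filter _), Multiset.filter_add_not] at htotal

end Backward


/-- Meredith extension preserves the existence of `t` pairwise disjoint
perfect matchings: the multigraph `G` has `t` pairwise (edge-)disjoint perfect
matchings iff its Meredith extension `G_v` at a vertex `v` of degree `t ≥ 2`
does. -/
theorem meredith_preserves_disjoint_pms {V : Type} [Fintype V] [DecidableEq V]
    (E : Multiset (Sym2 V)) (hloopless : ∀ e ∈ E, ¬ e.IsDiag)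
    (v : V) (t : ℕ) (ht : 2 ≤ t) (f : Fin t → V) (hf : ∀ i, f i ≠ v)
    (hdeg : E.filter (fun e => v ∈ e) =
      (Finset.univ : Finset (Fin t)).val.map (fun i => s(v, f i))) :
    (∃ N : Fin t → Multiset (Sym2 V),
        (∀ i, IsPMOf E (N i)) ∧ (∑ i, N i) ≤ E) ↔
    (∃ N : Fin t → Multiset (Sym2 (MeredithV V v t)),
        (∀ i, IsPMOf (meredithEdges E v t (by omega) f) (N i)) ∧
        (∑ i, N i) ≤ meredithEdges E v t (by omega) f) := by
  constructor
  · rintro ⟨N, hN, hsum⟩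
    exact meredith_forward E v ht (by omega) f hf hdeg N hN hsum
  · rintro ⟨M, hM, hsum⟩
    exact meredith_backward E v ht (by omega) f hf hdeg M hM hsum
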